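/- Given a matched pair of groupoids (H, V, ▷, ◁) on a common base P, the set D = V ×_{e,s} H of pairs (g,x) with e(g) = s(x), equipped with s(g,x) = s(g), e(g,x) = e(x), product (g,x)(h,y) = (g(x▷h), (x◁h)y) (defined when e(x) = s(h)), identities id_P = (id_P, id_P), is a groupoid. -/

import Mathlib

universe u v w

/-- An (algebraic) groupoid on a base `P` with set of arrows `G`.  The composition
`mul g h` (written `gh`, "first `g`, then `h`") is subject to axioms only when
`t g = s h`; its values on non-composable pairs are irrelevant. -/
structure Gpd (P : Type u) (G : Type v) where
  s : G → P
  t : G → P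
  one : P → G
  inv : G → G
  mul : G → G → G
  s_one : ∀ p, s (one p) = p
  t_one : ∀ p, t (one p) = p
  s_mul : ∀ g h, t g = s h → s (mul g h) = s g
  t_mul : ∀ g h, t g = s h → t (mul g h) = t h
  mul_assoc : ∀ g h i, t g = s h → t h = s i → mul (mul g h) i = mul g (mul h i)
  one_mul : ∀ g, mul (one (s g)) g = g
  mul_one : ∀ g, mul g (one (t g)) = g
  s_inv : ∀ g, s (inv g) = t g
  t_inv : ∀ g, t (inv g) = s g
  mul_inv : ∀ g, mul g (inv g) = one (s g)
  inv_mul : ∀ g, mul (inv g) g = one (t g)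

/-- A matched pair of groupoids `(H, V, ▷, ◁)` on a common base `P`:
`act x g = x ▷ g` and `coact x g = x ◁ g`, defined (i.e. subject to axioms) when
`t x = s g`. -/
structure MatchedPair (P : Type u) (H : Type v) (V : Type w) where
  GH : Gpd P H
  GV : Gpd P V
  act : H → V → V
  coact : H → V → H
  s_act : ∀ x g, GH.t x = GV.s g → GV.s (act x g) = GH.s x
  t_act : ∀ x g, GH.t x = GV.s g → GV.t (act x g) = GH.s (coact x g)
  t_coact : ∀ x g, GH.t x = GV.s g → GH.t (coact x g) = GV.t g
  mulH_act : ∀ x y g, GH.t x = GH.s y → GH.t y = GV.s g →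
    act (GH.mul x y) g = act x (act y g)
  one_act : ∀ g, act (GH.one (GV.s g)) g = g
  one_coact : ∀ g, coact (GH.one (GV.s g)) g = GH.one (GV.t g)
  coact_mulV : ∀ x g h, GH.t x = GV.s g → GV.t g = GV.s h →
    coact x (GV.mul g h) = coact (coact x g) h
  coact_one : ∀ x, coact x (GV.one (GH.t x)) = x
  act_one : ∀ x, act x (GV.one (GH.t x)) = GV.one (GH.s x)
  act_mulV : ∀ x g h, GH.t x = GV.s g → GV.t g = GV.s h →
    act x (GV.mul g h) = GV.mul (act x g) (act (coact x g) h)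
  coact_mulH : ∀ x y g, GH.t x = GH.s y → GH.t y = GV.s g →
    coact (GH.mul x y) g = GH.mul (coact x (act y g)) (coact y g)

namespace MatchedPair

variable {P : Type u} {H : Type v} {V : Type w} (mp : MatchedPair P H V)

/-- The arrows `V ×_{e,s} H` of the diagonal groupoid `D = V ⋈ H` of a matched pair. -/
def Diag : Type max v w := {q : V × H // mp.GV.t q.1 = mp.GH.s q.2}

end MatchedPair

section Diagonal

open Classical in
/-- The diagonal groupoid structure on `V ×_{e,s} H`. -/
noncomputable def MatchedPair.diagGpd {P : Type u} {H : Type v} {V : Type w}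
    (mp : MatchedPair P H V) : Gpd P mp.Diag where
  s a := mp.GV.s a.1.1
  t a := mp.GH.t a.1.2
  one p := ⟨(mp.GV.one p, mp.GH.one p), by rw [mp.GV.t_one, mp.GH.s_one]⟩
  inv a := ⟨(mp.act (mp.GH.inv a.1.2) (mp.GV.inv a.1.1),
             mp.coact (mp.GH.inv a.1.2) (mp.GV.inv a.1.1)),
    mp.t_act _ _ (by rw [mp.GH.t_inv, mp.GV.s_inv, a.2])⟩
  mul a b :=
    (if hc : mp.GH.t a.1.2 = mp.GV.s b.1.1 then
      ⟨(mp.GV.mul a.1.1 (mp.act a.1.2 b.1.1),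
        mp.GH.mul (mp.coact a.1.2 b.1.1) b.1.2), by
        rw [mp.GV.t_mul _ _ (by rw [mp.s_act _ _ hc, a.2]),
            mp.GH.s_mul _ _ (by rw [mp.t_coact _ _ hc, b.2]),
            mp.t_act _ _ hc]⟩
    else ⟨a.1, a.2⟩ : {q : V × H // mp.GV.t q.1 = mp.GH.s q.2})
  s_one p := mp.GV.s_one p
  t_one p := mp.GH.t_one p
  s_mul a b hc := by
    simp only [dif_pos hc]
    exact mp.GV.s_mul _ _ (by rw [mp.s_act _ _ hc, a.2])
  t_mul a b hc := by
    simp only [dif_pos hc]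
    exact mp.GH.t_mul _ _ (by rw [mp.t_coact _ _ hc, b.2])
  mul_assoc a b c h1 h2 := by
    obtain ⟨⟨g, x⟩, ha⟩ := a
    obtain ⟨⟨h, y⟩, hb⟩ := b
    obtain ⟨⟨k, z⟩, hcm⟩ := c
    simp only at h1 h2 ha hb hcm
    have hxh : mp.GV.s (mp.act x h) = mp.GH.s x := mp.s_act _ _ h1
    have hyk : mp.GV.s (mp.act y k) = mp.GH.s y := mp.s_act _ _ h2
    have htxh : mp.GH.t (mp.coact x h) = mp.GV.t h := mp.t_coact _ _ h1
    have htyk : mp.GH.t (mp.coact y k) = mp.GV.t k := mp.t_coact _ _ h2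
    have hxhy : mp.GH.t (mp.coact x h) = mp.GH.s y := by rw [htxh, hb]
    have hhyk : mp.GV.t h = mp.GV.s (mp.act y k) := by rw [hyk, hb]
    simp only [dif_pos h1, dif_pos h2]
    rw [dif_pos (show mp.GH.t (mp.GH.mul (mp.coact x h) y) = mp.GV.s k by
          rw [mp.GH.t_mul _ _ hxhy, h2])]
    rw [dif_pos (show mp.GH.t x = mp.GV.s (mp.GV.mul h (mp.act y k)) by
          rw [mp.GV.s_mul _ _ hhyk, h1])]
    refine Subtype.ext (Prod.ext ?_ ?_) <;> simp only
    · rw [mp.act_mulV x h (mp.act y k) h1 hhyk,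
        mp.mulH_act (mp.coact x h) y k hxhy h2,
        mp.GV.mul_assoc g (mp.act x h) (mp.act (mp.coact x h) (mp.act y k))
          (by rw [hxh, ha])
          (by rw [mp.t_act x h h1,
              mp.s_act (mp.coact x h) (mp.act y k) (by rw [htxh, hb, ← hyk])])]
    · rw [mp.coact_mulV x h (mp.act y k) h1 hhyk,
        mp.coact_mulH (mp.coact x h) y k hxhy h2,
        mp.GH.mul_assoc (mp.coact (mp.coact x h) (mp.act y k)) (mp.coact y k) z
          (by rw [mp.t_coact (mp.coact x h) (mp.act y k) (by rw [htxh, hb, ← hyk]),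
              mp.t_act y k h2])
          (by rw [htyk, hcm])]
  one_mul a := by
    obtain ⟨⟨g, x⟩, ha⟩ := a
    simp only [dif_pos (show mp.GH.t (mp.GH.one (mp.GV.s g)) = mp.GV.s g from
      mp.GH.t_one _)]
    refine Subtype.ext (Prod.ext ?_ ?_) <;> simp only
    · rw [mp.one_act, mp.GV.one_mul]
    · rw [mp.one_coact, ha, mp.GH.one_mul]
  mul_one a := by
    obtain ⟨⟨g, x⟩, ha⟩ := a
    simp only [dif_pos (show mp.GH.t x = mp.GV.s (mp.GV.one (mp.GH.t x)) from
      (mp.GV.s_one _).symm)]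
    refine Subtype.ext (Prod.ext ?_ ?_) <;> simp only
    · rw [mp.act_one, ← ha, mp.GV.mul_one]
    · rw [mp.coact_one, mp.GH.mul_one]
  s_inv a := by
    simp only
    rw [mp.s_act _ _ (by rw [mp.GH.t_inv, mp.GV.s_inv, a.2]), mp.GH.s_inv]
  t_inv a := by
    simp only
    rw [mp.t_coact _ _ (by rw [mp.GH.t_inv, mp.GV.s_inv, a.2]), mp.GV.t_inv]
  mul_inv a := by
    obtain ⟨⟨g, x⟩, ha⟩ := a
    simp only at ha
    have hinv : mp.GH.t (mp.GH.inv x) = mp.GV.s (mp.GV.inv g) := by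
      rw [mp.GH.t_inv, mp.GV.s_inv, ha]
    have hsx : mp.GH.s x = mp.GV.s (mp.GV.inv g) := by rw [mp.GV.s_inv, ha]
    have hxx : mp.GH.t x = mp.GH.s (mp.GH.inv x) := (mp.GH.s_inv x).symm
    simp only [dif_pos (show mp.GH.t x = mp.GV.s (mp.act (mp.GH.inv x) (mp.GV.inv g)) by
      rw [mp.s_act _ _ hinv, mp.GH.s_inv])]
    refine Subtype.ext (Prod.ext ?_ ?_) <;> simp only
    · rw [← mp.mulH_act x (mp.GH.inv x) (mp.GV.inv g) hxx hinv, mp.GH.mul_inv,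
        hsx, mp.one_act, mp.GV.mul_inv]
    · rw [← mp.coact_mulH x (mp.GH.inv x) (mp.GV.inv g) hxx hinv, mp.GH.mul_inv,
        hsx, mp.one_coact, mp.GV.t_inv]
  inv_mul a := by
    obtain ⟨⟨g, x⟩, ha⟩ := a
    simp only at ha
    have hinv : mp.GH.t (mp.GH.inv x) = mp.GV.s (mp.GV.inv g) := by
      rw [mp.GH.t_inv, mp.GV.s_inv, ha]
    have htg : mp.GV.t (mp.GV.inv g) = mp.GV.s g := mp.GV.t_inv g
    have htg' : mp.GV.t g = mp.GH.t (mp.GH.inv x) := by rw [mp.GH.t_inv, ha]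
    simp only [dif_pos (show mp.GH.t (mp.coact (mp.GH.inv x) (mp.GV.inv g)) = mp.GV.s g by
      rw [mp.t_coact _ _ hinv, htg])]
    refine Subtype.ext (Prod.ext ?_ ?_) <;> simp only
    · rw [← mp.act_mulV (mp.GH.inv x) (mp.GV.inv g) g hinv htg, mp.GV.inv_mul,
        htg', mp.act_one, mp.GH.s_inv]
    · rw [← mp.coact_mulV (mp.GH.inv x) (mp.GV.inv g) g hinv htg, mp.GV.inv_mul,
        htg', mp.coact_one, mp.GH.inv_mul]

end Diagonal

/-- for a matched pair of groupoids `(H, V, ▷, ◁)`, the set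
`D = V ×_{e,s} H` with `s(g,x) = s(g)`, `e(g,x) = e(x)`, product
`(g,x)(h,y) = (g(x▷h), (x◁h)y)` and identities `(id_P, id_P)` is a groupoid. -/
theorem diagonal_is_groupoid {P : Type u} {H : Type v} {V : Type w}
    (mp : MatchedPair P H V) :
    ∃ DG : Gpd P mp.Diag,
      (∀ a : mp.Diag, DG.s a = mp.GV.s a.1.1) ∧
      (∀ a : mp.Diag, DG.t a = mp.GH.t a.1.2) ∧
      (∀ p : P, (DG.one p).1 = (mp.GV.one p, mp.GH.one p)) ∧
      (∀ a b : mp.Diag, DG.t a = DG.s b →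
        (DG.mul a b).1 =
          (mp.GV.mul a.1.1 (mp.act a.1.2 b.1.1),
           mp.GH.mul (mp.coact a.1.2 b.1.1) b.1.2)) := by
  refine ⟨mp.diagGpd, fun a => rfl, fun a => rfl, fun p => rfl, fun a b hc => ?_⟩
  simp only [MatchedPair.diagGpd,
    dif_pos (show mp.GH.t a.1.2 = mp.GV.s b.1.1 from hc)]
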